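/- Let p > 3 be a prime and let e₁, e₂, e₃ be positive integers, each prime to p, satisfying the triangle inequality, with e₁+e₂+e₃ odd, e₁ < p, and p < e₂ < 2p, p < e₃ < 2p. Let d be the integer with 2d−2 = (e₁−1)+(e₂−1)+(e₃−1). Then (e₁,e₂,e₃) is numerically p-admissible if and only if d < 2p and e₂ + e₃ − e₁ ≥ 2p. -/
import Mathlib


/-- `eDown q e` is `e^{[m,d]} = e − q⌊e/q⌋` where `q = p^m`. -/
def eDown (q e : ℕ) : ℕ := e - q * (e / q)

/-- `eUp q e` is `e^{[m,u]} = q⌈e/q⌉ − e` where `q = p^m`. -/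
def eUp (q e : ℕ) : ℕ := q * ((e + q - 1) / q) - e

/-- Numerical `p`-admissibility for a triple (with `2d − 2 = Σᵢ (eᵢ − 1)`). -/
def NumericallyPAdmissible3 (p d : ℕ) (e : Fin 3 → ℕ) : Prop :=
  ∀ m : ℕ, 1 ≤ m → ∀ S : Finset (Fin 3),
    p ^ m ≤ d →
    (∀ i ∈ S, p ^ m < e i) →
    Odd ((∑ i ∈ S, e i / p ^ m) + ∑ i ∈ Sᶜ, (e i + p ^ m - 1) / p ^ m) →
    p ^ m ≤ (∑ i ∈ S, eDown (p ^ m) (e i)) + ∑ i ∈ Sᶜ, eUp (p ^ m) (e i)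

set_option maxHeartbeats 1600000 in
/-- Example 2.6, first case: for `p > 3`, `e₁ < p` and `p < e₂, e₃ < 2p`, the triple
`(e₁, e₂, e₃)` is numerically `p`-admissible if and only if `d < 2p` and
`e₂ + e₃ − e₁ ≥ 2p`. -/
theorem admissibility_one_small_two_medium (p : ℕ) (hp : p.Prime) (hp3 : 3 < p)
    (d : ℕ) (e : Fin 3 → ℕ)
    (he : ∀ i, 0 < e i) (hep : ∀ i, ¬ p ∣ e i)
    (htri : e 0 ≤ e 1 + e 2 ∧ e 1 ≤ e 0 + e 2 ∧ e 2 ≤ e 0 + e 1)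
    (hodd : Odd (e 0 + e 1 + e 2))
    (h1 : e 0 < p)
    (h2l : p < e 1) (h2u : e 1 < 2 * p)
    (h3l : p < e 2) (h3u : e 2 < 2 * p)
    (hsum : 2 * d + 1 = e 0 + e 1 + e 2) :
    NumericallyPAdmissible3 p d e ↔ (d < 2 * p ∧ 2 * p + e 0 ≤ e 1 + e 2) := by
  have hp0 : 0 < p := hp.pos
  have he0 := he 0
  have hpd : p ≤ d := by omega
  have q0 : e 0 / p = 0 := Nat.div_eq_of_lt h1
  have q1 : e 1 / p = 1 := Nat.div_eq_of_lt_le (by omega) (by omega)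
  have q2 : e 2 / p = 1 := Nat.div_eq_of_lt_le (by omega) (by omega)
  have c0 : (e 0 + p - 1) / p = 1 := Nat.div_eq_of_lt_le (by omega) (by omega)
  have c1 : (e 1 + p - 1) / p = 2 := Nat.div_eq_of_lt_le (by omega) (by omega)
  have c2 : (e 2 + p - 1) / p = 2 := Nat.div_eq_of_lt_le (by omega) (by omega)
  have d0 : eDown p (e 0) = e 0 := by simp [eDown, q0]
  have d1 : eDown p (e 1) = e 1 - p := by simp [eDown, q1]
  have d2 : eDown p (e 2) = e 2 - p := by simp [eDown, q2]
  have u0 : eUp p (e 0) = p - e 0 := by simp [eUp, c0]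
  have u1 : eUp p (e 1) = 2 * p - e 1 := by rw [eUp, c1]; ring_nf
  have u2 : eUp p (e 2) = 2 * p - e 2 := by rw [eUp, c2]; ring_nf
  have hcomp_empty : ((∅ : Finset (Fin 3))ᶜ) = {0, 1, 2} := by decide
  have hcomp12 : (({1, 2} : Finset (Fin 3))ᶜ) = {0} := by decide
  have hcomp1 : (({1} : Finset (Fin 3))ᶜ) = {0, 2} := by decide
  have hcomp2 : (({2} : Finset (Fin 3))ᶜ) = {0, 1} := by decide
  constructor
  · intro H
    constructor
    · have := H 1 le_rfl ∅ (by simpa using hpd) (by simp)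
        (by
          rw [pow_one, hcomp_empty]
          simp [Finset.sum_insert, Finset.sum_singleton, q0, q1, q2, c0, c1, c2]
          decide)
      rw [pow_one, hcomp_empty] at this
      simp [Finset.sum_insert, Finset.sum_singleton, u0, u1, u2] at this
      omega
    · have := H 1 le_rfl {1, 2} (by simpa using hpd)
        (by
          intro i hi
          rw [pow_one]
          fin_cases hi
          · exact h2l
          · exact h3l)
        (by
          rw [pow_one, hcomp12]
          simp [Finset.sum_insert, Finset.sum_singleton, q1, q2, c0]
          decide)
      rw [pow_one, hcomp12] at this
      simp [Finset.sum_insert, Finset.sum_singleton, d1, d2, u0] at this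
      omega
  · rintro ⟨hd, hge⟩ m hm S hpm hS hoddS
    have hm1 : m = 1 := by
      by_contra hne
      have h2m : p ^ 2 ≤ p ^ m := Nat.pow_le_pow_right hp0 (by omega)
      have : p * p ≤ p ^ m := by rwa [pow_two] at h2m
      nlinarith
    subst hm1
    rw [pow_one] at hpm hS hoddS ⊢
    have hS0 : (0 : Fin 3) ∉ S := fun h => absurd (hS 0 h) (by omega)
    by_cases hS1 : (1 : Fin 3) ∈ S <;> by_cases hS2 : (2 : Fin 3) ∈ S
    · have hSeq : S = {1, 2} := by
        ext i; fin_cases i <;> simp [hS0, hS1, hS2]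
      subst hSeq
      rw [hcomp12] at hoddS ⊢
      simp [Finset.sum_insert, Finset.sum_singleton, d1, d2, u0] at hoddS ⊢
      omega
    · have hSeq : S = {1} := by
        ext i; fin_cases i <;> simp [hS0, hS1, hS2]
      subst hSeq
      rw [hcomp1] at hoddS
      simp [Finset.sum_insert, Finset.sum_singleton, q1, c0, c2] at hoddS
      exact absurd hoddS (by decide)
    · have hSeq : S = {2} := by
        ext i; fin_cases i <;> simp [hS0, hS1, hS2]
      subst hSeq
      rw [hcomp2] at hoddS
      simp [Finset.sum_insert, Finset.sum_singleton, q2, c0, c1] at hoddS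
      exact absurd hoddS (by decide)
    · have hSeq : S = ∅ := by
        ext i; fin_cases i <;> simp [hS0, hS1, hS2]
      subst hSeq
      rw [hcomp_empty] at hoddS ⊢
      simp [Finset.sum_insert, Finset.sum_singleton, u0, u1, u2] at hoddS ⊢
      omega
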